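/- arXiv:1105.4389 — 5 statements merged into one kernel-verified Lean document; each statement's English description precedes it below -/
import Mathlib

section
/- Hankel determinant identity with repeated nodes: for a weight function w on (0,1) and distinct parameters y₁,…,y_p for which all integrals converge, det[∫_0^1 x^{j+k-2} w(x)/∏_{l=1}^p (x-y_l)² dx]_{1≤j,k≤p} = (1/∏_{j<k}(y_j-y_k)²) · det[∫_0^1 w(x)/((x-y_j)(x-y_k)) dx]_{1≤j,k≤p}. -/
open Real MeasureTheory

open Finset Matrix Polynomial in
private theorem hankel_lag (p : ℕ) (y : Fin p → ℝ) (hy : Function.Injective y) (j : Fin p)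
    (x : ℝ) :
    x ^ (j:ℕ) = ∑ a, y a ^ (j:ℕ) * ∏ l ∈ univ.erase a, ((y a - y l)⁻¹ * (x - y l)) := by
  have h := Lagrange.eq_interpolate (s := (univ : Finset (Fin p))) (v := y)
    (f := (X : ℝ[X]) ^ (j:ℕ)) (hy.injOn) ?_
  · have := congrArg (Polynomial.eval x) h
    simpa [Lagrange.interpolate_apply, Lagrange.basis, Lagrange.basisDivisor,
      Polynomial.eval_finset_sum, Polynomial.eval_prod, mul_comm] using this
  · rw [Polynomial.degree_X_pow, Finset.card_univ, Fintype.card_fin]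
    exact_mod_cast j.isLt

open Finset in
private theorem hankel_pf (p : ℕ) (y : Fin p → ℝ) (hy : Function.Injective y) (j : Fin p)
    (x : ℝ) (hx : ∀ l, x ≠ y l) :
    x ^ (j:ℕ) / ∏ l, (x - y l)
      = ∑ a, (y a ^ (j:ℕ) * (∏ l ∈ univ.erase a, (y a - y l))⁻¹) / (x - y a) := by
  have hD : (∏ l, (x - y l)) ≠ 0 :=
    Finset.prod_ne_zero_iff.2 fun l _ => sub_ne_zero.2 (hx l)
  rw [div_eq_iff hD, Finset.sum_mul]
  nth_rewrite 1 [hankel_lag p y hy j x]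
  refine Finset.sum_congr rfl fun a _ => ?_
  have ha : x - y a ≠ 0 := sub_ne_zero.2 (hx a)
  have hQ : (∏ l ∈ univ.erase a, (y a - y l)) ≠ 0 :=
    Finset.prod_ne_zero_iff.2 fun l hl =>
      sub_ne_zero.2 fun h => (Finset.mem_erase.1 hl).1 (hy h.symm)
  have hsplit : (∏ l, (x - y l)) = (∏ l ∈ univ.erase a, (x - y l)) * (x - y a) :=
    (Finset.prod_erase_mul _ _ (mem_univ a)).symm
  rw [Finset.prod_mul_distrib, hsplit]
  field_simp
  simp only [one_div]
  rw [Finset.prod_inv_distrib, mul_right_comm, mul_assoc (y a ^ _), inv_mul_cancel₀ hQ, mul_one]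

open Finset in
private theorem hankel_pairs_prod (p : ℕ) (f : Fin p → Fin p → ℝ) :
    ∏ q ∈ univ.filter (fun q : Fin p × Fin p => q.1 < q.2), f q.1 q.2
      = ∏ i, ∏ j ∈ Ioi i, f i j := by
  rw [Finset.prod_filter, ← Finset.univ_product_univ, Finset.prod_product]
  refine Finset.prod_congr rfl fun i _ => ?_
  rw [← Finset.prod_filter]
  refine Finset.prod_congr ?_ fun j _ => rfl
  ext j; simp

open Finset in
private theorem hankel_offdiag (p : ℕ) (y : Fin p → ℝ) :
    ∏ a, ∏ l ∈ univ.erase a, (y a - y l) ^ 2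
      = (∏ i, ∏ j ∈ Ioi i, (y i - y j) ^ 2) ^ 2 := by
  have h := Finset.prod_prod_Ioi_mul_eq_prod_prod_off_diag
    (f := fun a b : Fin p => (y b - y a) ^ 2)
  simp only [Finset.compl_singleton] at h
  have h2 : ∏ a, ∏ l ∈ univ.erase a, (y a - y l) ^ 2
      = ∏ i, ∏ j ∈ Ioi i, (y i - y j) ^ 2 * (y j - y i) ^ 2 := by
    refine Eq.trans ?_ h.symm
    exact Finset.prod_congr rfl fun a _ =>
      Finset.prod_congr (by congr 1) fun l _ => rfl
  rw [h2, ← Finset.prod_pow]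
  refine Finset.prod_congr rfl fun i _ => ?_
  rw [← Finset.prod_pow]
  exact Finset.prod_congr rfl fun j _ => by ring

/-- Hankel determinant identity with repeated nodes:
`det[∫₀¹ x^{j+k-2} w(x)/∏_l (x-y_l)² dx] = Δ(y)^{-2} det[∫₀¹ w(x)/((x-y_j)(x-y_k)) dx]`
for distinct nodes `y₁,…,y_p` outside `[0,1]`. -/
theorem hankel_repeated_nodes (p : ℕ) (w : ℝ → ℝ) (y : Fin p → ℝ)
    (hy : Function.Injective y) (hy' : ∀ l, y l ∉ Set.Icc (0:ℝ) 1)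
    (h1 : ∀ j k : Fin p, IntegrableOn
      (fun x => x ^ ((j : ℕ) + (k : ℕ)) * w x / ∏ l, (x - y l) ^ 2) (Set.Ioo 0 1))
    (h2 : ∀ j k : Fin p, IntegrableOn
      (fun x => w x / ((x - y j) * (x - y k))) (Set.Ioo 0 1)) :
    (Matrix.of fun j k : Fin p =>
        ∫ x in Set.Ioo (0:ℝ) 1, x ^ ((j : ℕ) + (k : ℕ)) * w x / ∏ l, (x - y l) ^ 2).det
    = (1 / ∏ q ∈ Finset.univ.filter (fun q : Fin p × Fin p => q.1 < q.2),
          (y q.1 - y q.2) ^ 2) *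
      (Matrix.of fun j k : Fin p =>
        ∫ x in Set.Ioo (0:ℝ) 1, w x / ((x - y j) * (x - y k))).det := by
  classical
  set d : Fin p → ℝ := fun a => (∏ l ∈ Finset.univ.erase a, (y a - y l))⁻¹ with hd
  set C : Matrix (Fin p) (Fin p) ℝ := Matrix.of fun j a : Fin p => y a ^ (j:ℕ) * d a with hC
  set M : Matrix (Fin p) (Fin p) ℝ := Matrix.of fun a b : Fin p =>
    ∫ x in Set.Ioo (0:ℝ) 1, w x / ((x - y a) * (x - y b)) with hM
  -- pointwise identity of integrands
  have hx01 : ∀ x ∈ Set.Ioo (0:ℝ) 1, ∀ l, x ≠ y l := by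
    intro x hx l h
    exact hy' l (h ▸ Set.mem_Icc_of_Ioo hx)
  have key : ∀ j k : Fin p,
      (∫ x in Set.Ioo (0:ℝ) 1, x ^ ((j : ℕ) + (k : ℕ)) * w x / ∏ l, (x - y l) ^ 2)
        = ∑ a, ∑ b, (y a ^ (j:ℕ) * d a) * (y b ^ (k:ℕ) * d b) * M a b := by
    intro j k
    have hEq : Set.EqOn
        (fun x => x ^ ((j : ℕ) + (k : ℕ)) * w x / ∏ l, (x - y l) ^ 2)
        (fun x => ∑ a, ∑ b, (y a ^ (j:ℕ) * d a) * (y b ^ (k:ℕ) * d b)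
          * (w x / ((x - y a) * (x - y b)))) (Set.Ioo 0 1) := by
      intro x hx
      have hxl := hx01 x hx
      have hD : (∏ l, (x - y l)) ≠ 0 :=
        Finset.prod_ne_zero_iff.2 fun l _ => sub_ne_zero.2 (hxl l)
      have hsq : (∏ l, (x - y l) ^ 2) = (∏ l, (x - y l)) ^ 2 := by
        rw [Finset.prod_pow]
      have lhs_eq : x ^ ((j : ℕ) + (k : ℕ)) * w x / ∏ l, (x - y l) ^ 2
          = (x ^ (j:ℕ) / ∏ l, (x - y l)) * (x ^ (k:ℕ) / ∏ l, (x - y l)) * w x := by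
        rw [hsq, pow_add]; ring
      simp only
      rw [lhs_eq, hankel_pf p y hy j x hxl, hankel_pf p y hy k x hxl,
        Finset.sum_mul_sum, Finset.sum_mul]
      refine Finset.sum_congr rfl fun a _ => ?_
      rw [Finset.sum_mul]
      refine Finset.sum_congr rfl fun b _ => ?_
      rw [div_mul_div_comm, div_mul_eq_mul_div, mul_div_assoc]
    rw [MeasureTheory.setIntegral_congr_fun measurableSet_Ioo hEq,
      MeasureTheory.integral_finset_sum]
    · refine Finset.sum_congr rfl fun a _ => ?_
      rw [MeasureTheory.integral_finset_sum]
      · exact Finset.sum_congr rfl fun b _ => by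
          rw [MeasureTheory.integral_const_mul]; rfl
      · exact fun b _ => ((h2 a b).const_mul _)
    · exact fun a _ =>
        MeasureTheory.integrable_finset_sum _ fun b _ => ((h2 a b).const_mul _)
  -- matrix factorization
  have hA : (Matrix.of fun j k : Fin p =>
      ∫ x in Set.Ioo (0:ℝ) 1, x ^ ((j : ℕ) + (k : ℕ)) * w x / ∏ l, (x - y l) ^ 2)
      = C * M * C.transpose := by
    ext j k
    rw [Matrix.of_apply, key j k, Matrix.mul_apply]
    rw [Finset.sum_comm]
    refine Finset.sum_congr rfl fun b _ => ?_
    rw [Matrix.mul_apply, Finset.sum_mul]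
    refine Finset.sum_congr rfl fun a _ => ?_
    simp only [hC, Matrix.of_apply, Matrix.transpose_apply]
    ring
  -- determinant of C
  have hCdet : C.det = (∏ i, ∏ j ∈ Finset.Ioi i, (y j - y i)) * ∏ a, d a := by
    have : C = (Matrix.vandermonde y).transpose
        * Matrix.diagonal d := by
      ext j a
      rw [Matrix.mul_diagonal]
      rfl
    rw [this, Matrix.det_mul, Matrix.det_transpose, Matrix.det_vandermonde,
      Matrix.det_diagonal]
  -- the pair product
  set P : ℝ := ∏ i, ∏ j ∈ Finset.Ioi i, (y i - y j) ^ 2 with hPdef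
  have hPpairs : (∏ q ∈ Finset.univ.filter (fun q : Fin p × Fin p => q.1 < q.2),
      (y q.1 - y q.2) ^ 2) = P := hankel_pairs_prod p (fun i j => (y i - y j) ^ 2)
  have hPne : P ≠ 0 := by
    refine Finset.prod_ne_zero_iff.2 fun i _ => Finset.prod_ne_zero_iff.2 fun l hl => ?_
    exact pow_ne_zero _ (sub_ne_zero.2 fun h =>
      (Finset.mem_Ioi.1 hl).ne' (hy h.symm))
  have hC2 : C.det ^ 2 = 1 / P := by
    rw [hCdet, mul_pow]
    have h1' : (∏ i, ∏ j ∈ Finset.Ioi i, (y j - y i)) ^ 2 = P := by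
      rw [hPdef, ← Finset.prod_pow]
      refine Finset.prod_congr rfl fun i _ => ?_
      rw [← Finset.prod_pow]
      exact Finset.prod_congr rfl fun j _ => by ring
    have h2' : (∏ a, d a) ^ 2 = (P ^ 2)⁻¹ := by
      rw [← Finset.prod_pow, ← hankel_offdiag p y, ← Finset.prod_inv_distrib]
      refine Finset.prod_congr rfl fun a _ => ?_
      rw [hd, inv_pow, Finset.prod_pow]
    rw [h1', h2']
    rw [sq]
    field_simp
  rw [hA, hPpairs, Matrix.det_mul, Matrix.det_mul, Matrix.det_transpose]
  calc C.det * M.det * C.det = C.det ^ 2 * M.det := by ring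
    _ = 1 / P * M.det := by rw [hC2]
end

section
/- The Toeplitz determinant recurrence (Baxter): with r_n = φ_n(0)/κ_n and r̄_n = φ̄_n(0)/κ_n the reflection coefficients of a bi-orthogonal polynomial system, the Toeplitz determinants I_n[w] = det[w_{j-k}]_{0≤j,k≤n-1} satisfy I_{n+1}[w]·I_{n-1}[w] / (I_n[w])² = 1 - r_n·r̄_n for n ≥ 1. -/
open Matrix Polynomial

/-- The Toeplitz determinant `I_n[ζ^ε w] = det[w_{-ε+j-k}]_{0≤j,k≤n-1}` built from the
trigonometric moments `w : ℤ → ℂ`. -/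
noncomputable def toeplitzDet (w : ℤ → ℂ) (ε : ℤ) (n : ℕ) : ℂ :=
  (Matrix.of fun j k : Fin n => w (-ε + (j : ℤ) - (k : ℤ))).det

open Matrix Polynomial

variable {R : Type*} [CommRing R]

/-- Multiplicative Desnanot–Jacobi identity over a commutative ring, in "Sum" coordinates. -/
lemma dj_mul {n : ℕ} (N : Matrix (Fin n ⊕ Fin 2) (Fin n ⊕ Fin 2) R) :
    N.det * (N.adjugate (.inr 0) (.inr 0) * N.adjugate (.inr 1) (.inr 1)
      - N.adjugate (.inr 0) (.inr 1) * N.adjugate (.inr 1) (.inr 0))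
      = (N.submatrix Sum.inl Sum.inl).det * N.det ^ 2 := by
  classical
  set B : Matrix (Fin n ⊕ Fin 2) (Fin n ⊕ Fin 2) R :=
    fromBlocks 1 (of fun a b => N.adjugate (.inl a) (.inr b)) 0
      (of fun a b => N.adjugate (.inr a) (.inr b)) with hB
  have hBcol : ∀ z b, B z (Sum.inr b) = N.adjugate z (Sum.inr b) := by
    rintro (z | z) b <;> rfl
  have h1 : N * B = fromBlocks (N.submatrix Sum.inl Sum.inl) 0
      (N.submatrix Sum.inr Sum.inl) (N.det • (1 : Matrix (Fin 2) (Fin 2) R)) := by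
    ext x y
    rcases y with b | b
    · rcases x with a | a <;>
        simp [B, Matrix.mul_apply, Fintype.sum_sum_type, Matrix.one_apply, mul_ite]
    · have hx : (N * B) x (Sum.inr b) = (N * N.adjugate) x (Sum.inr b) := by
        simp only [Matrix.mul_apply]
        exact Finset.sum_congr rfl fun z _ => by rw [hBcol]
      rw [hx, Matrix.mul_adjugate]
      rcases x with a | a <;>
        simp [Matrix.one_apply, Matrix.smul_apply, fromBlocks_apply₁₂, fromBlocks_apply₂₂]
  have h2 := congrArg Matrix.det h1
  rw [Matrix.det_mul, hB, Matrix.det_fromBlocks_zero₂₁, Matrix.det_fromBlocks_zero₁₂,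
    Matrix.det_one, one_mul, Matrix.det_smul, Matrix.det_one, mul_one] at h2
  rw [Matrix.det_fin_two] at h2
  simp only [Matrix.of_apply] at h2
  rw [Fintype.card_fin] at h2
  exact h2

/-- Desnanot–Jacobi over ℂ, unconditional, in "Sum" coordinates. -/
lemma dj_complex {n : ℕ} (T : Matrix (Fin n ⊕ Fin 2) (Fin n ⊕ Fin 2) ℂ) :
    T.adjugate (.inr 0) (.inr 0) * T.adjugate (.inr 1) (.inr 1)
      - T.adjugate (.inr 0) (.inr 1) * T.adjugate (.inr 1) (.inr 0)
      = (T.submatrix Sum.inl Sum.inl).det * T.det := by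
  classical
  set N := charmatrix (-T) with hN
  have hd : N.det ≠ 0 := (Matrix.charpoly_monic (-T)).ne_zero
  have h := dj_mul N
  have h' : N.adjugate (.inr 0) (.inr 0) * N.adjugate (.inr 1) (.inr 1)
      - N.adjugate (.inr 0) (.inr 1) * N.adjugate (.inr 1) (.inr 0)
      = (N.submatrix Sum.inl Sum.inl).det * N.det := by
    apply mul_left_cancel₀ hd
    rw [h]; ring
  have hmap : N.map (Polynomial.evalRingHom (0 : ℂ)) = T := by
    ext i j
    by_cases hij : i = j
    · subst hij
      simp [hN, charmatrix_apply_eq]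
    · simp [hN, charmatrix_apply_ne _ _ _ hij]
  have := congrArg (Polynomial.evalRingHom (0 : ℂ)) h'
  simp only [map_sub, _root_.map_mul] at this
  rw [RingHom.map_det, RingHom.map_det, RingHom.mapMatrix_apply, RingHom.mapMatrix_apply] at this
  have hadj : ∀ i j, (Polynomial.evalRingHom (0 : ℂ)) (N.adjugate i j) = T.adjugate i j := by
    intro i j
    have h2 := RingHom.map_adjugate (Polynomial.evalRingHom (0 : ℂ)) N
    rw [RingHom.mapMatrix_apply, RingHom.mapMatrix_apply, hmap] at h2
    calc (Polynomial.evalRingHom (0 : ℂ)) (N.adjugate i j)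
        = (N.adjugate.map (Polynomial.evalRingHom (0 : ℂ))) i j := rfl
      _ = T.adjugate i j := by rw [h2]
  rw [hadj, hadj, hadj, hadj] at this
  have hsub : (N.submatrix Sum.inl Sum.inl).map (Polynomial.evalRingHom (0 : ℂ))
      = T.submatrix Sum.inl Sum.inl := by rw [← hmap]; rfl
  rw [hsub, hmap] at this
  exact this

lemma dj_fin (m : ℕ) (M : Matrix (Fin (m + 2)) (Fin (m + 2)) ℂ) :
    M.adjugate 0 0 * M.adjugate (Fin.last (m + 1)) (Fin.last (m + 1))
      - M.adjugate 0 (Fin.last (m + 1)) * M.adjugate (Fin.last (m + 1)) 0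
      = (M.submatrix (fun i : Fin m => i.succ.castSucc) (fun i : Fin m => i.succ.castSucc)).det
        * M.det := by
  classical
  set f : Fin m ⊕ Fin 2 → Fin (m + 2) :=
    Sum.elim (fun i => i.succ.castSucc) ![(0 : Fin (m + 2)), Fin.last (m + 1)] with hf
  have hinj : Function.Injective f := by
    rintro (a | a) (b | b) h
    · simp only [hf, Sum.elim_inl] at h
      exact congrArg Sum.inl (Fin.succ_inj.mp (Fin.castSucc_inj.mp h))
    · exfalso
      have ha := a.isLt
      fin_cases b <;> simp [hf, Fin.ext_iff] at h <;> omega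
    · exfalso
      have hb := b.isLt
      fin_cases a <;> simp [hf, Fin.ext_iff] at h <;> omega
    · fin_cases a <;> fin_cases b <;> first | rfl | (simp [hf, Fin.ext_iff] at h)
  have hbij : Function.Bijective f :=
    (Fintype.bijective_iff_injective_and_card f).mpr ⟨hinj, by simp⟩
  let e : Fin m ⊕ Fin 2 ≃ Fin (m + 2) := Equiv.ofBijective f hbij
  have h := dj_complex (M.submatrix e e)
  rw [Matrix.adjugate_submatrix_equiv_self, Matrix.det_submatrix_equiv_self,
    Matrix.submatrix_submatrix] at h
  have e0 : e (Sum.inr 0) = 0 := by simp [e, Equiv.ofBijective, hf]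
  have e1 : e (Sum.inr 1) = Fin.last (m + 1) := by simp [e, Equiv.ofBijective, hf]
  have einl : (⇑e ∘ Sum.inl) = fun i : Fin m => (i.succ.castSucc : Fin (m + 2)) := rfl
  simp only [Matrix.submatrix_apply, e0, e1, einl] at h
  exact h

/-- Baxter's recurrence: with reflection coefficients
`r_n = (-1)^n I_n[ζw]/I_n[w]` and `r̄_n = (-1)^n I_n[ζ⁻¹w]/I_n[w]`, the Toeplitz
determinants satisfy `I_{n+1} I_{n-1} / I_n² = 1 - r_n r̄_n` for `n ≥ 1`. -/
theorem baxter_toeplitz_recurrence (w : ℤ → ℂ)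
    (hne : ∀ n : ℕ, 1 ≤ n → toeplitzDet w 0 n ≠ 0) (n : ℕ) (hn : 1 ≤ n) :
    toeplitzDet w 0 (n + 1) * toeplitzDet w 0 (n - 1) / (toeplitzDet w 0 n) ^ 2
      = 1 - ((-1 : ℂ) ^ n * toeplitzDet w 1 n / toeplitzDet w 0 n) *
            ((-1 : ℂ) ^ n * toeplitzDet w (-1) n / toeplitzDet w 0 n) := by
  obtain ⟨m, rfl⟩ : ∃ m, n = m + 1 := ⟨n - 1, (Nat.succ_pred_eq_of_pos hn).symm⟩
  set T : Matrix (Fin (m + 2)) (Fin (m + 2)) ℂ :=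
    Matrix.of (fun j k : Fin (m + 2) => w (-(0 : ℤ) + (j : ℤ) - (k : ℤ))) with hT
  have key := dj_fin m T
  have hdet : T.det = toeplitzDet w 0 (m + 2) := rfl
  have hsub : ∀ (ε : ℤ) (r c : Fin (m + 1) → Fin (m + 2)),
      (∀ i j, ((r i : ℤ) - (c j : ℤ)) = -ε + (i : ℤ) - (j : ℤ)) →
      (T.submatrix r c).det = toeplitzDet w ε (m + 1) := by
    intro ε r c hcond
    unfold toeplitzDet
    congr 1
    ext i j
    simp only [Matrix.submatrix_apply, Matrix.of_apply, hT]
    congr 1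
    linear_combination hcond i j
  have hcent : (T.submatrix (fun i : Fin m => i.succ.castSucc)
      (fun i : Fin m => i.succ.castSucc)).det = toeplitzDet w 0 m := by
    unfold toeplitzDet
    congr 1
    ext i j
    simp only [Matrix.submatrix_apply, Matrix.of_apply, hT]
    congr 1
    push_cast [Fin.coe_castSucc, Fin.val_succ]
    ring
  have h00 : T.adjugate 0 0 = toeplitzDet w 0 (m + 1) := by
    rw [Matrix.adjugate_fin_succ_eq_det_submatrix, Fin.succAbove_zero]
    rw [hsub 0 Fin.succ Fin.succ (fun i j => by push_cast [Fin.val_succ]; ring)]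
    norm_num
  have hll : T.adjugate (Fin.last (m + 1)) (Fin.last (m + 1)) = toeplitzDet w 0 (m + 1) := by
    rw [Matrix.adjugate_fin_succ_eq_det_submatrix, Fin.succAbove_last]
    rw [hsub 0 Fin.castSucc Fin.castSucc (fun i j => by push_cast [Fin.coe_castSucc]; ring)]
    rw [Fin.val_last]
    rw [show ((-1 : ℂ)) ^ (m + 1 + (m + 1)) = 1 from Even.neg_one_pow ⟨m + 1, by ring⟩, one_mul]
  have h0l : T.adjugate 0 (Fin.last (m + 1)) = (-1 : ℂ) ^ (m + 1) * toeplitzDet w 1 (m + 1) := by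
    rw [Matrix.adjugate_fin_succ_eq_det_submatrix, Fin.succAbove_last, Fin.succAbove_zero]
    rw [hsub 1 Fin.castSucc Fin.succ
      (fun i j => by push_cast [Fin.coe_castSucc, Fin.val_succ]; ring)]
    rw [Fin.val_last, Fin.val_zero, Nat.add_zero]
  have hl0 : T.adjugate (Fin.last (m + 1)) 0 = (-1 : ℂ) ^ (m + 1) * toeplitzDet w (-1) (m + 1) := by
    rw [Matrix.adjugate_fin_succ_eq_det_submatrix, Fin.succAbove_last, Fin.succAbove_zero]
    rw [hsub (-1) Fin.succ Fin.castSucc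
      (fun i j => by push_cast [Fin.coe_castSucc, Fin.val_succ]; ring)]
    rw [Fin.val_last, Fin.val_zero, Nat.zero_add]
  rw [h00, hll, h0l, hl0, hcent, hdet] at key
  have hI : toeplitzDet w 0 (m + 1) ≠ 0 := hne (m + 1) (by omega)
  have hsq : ((-1 : ℂ) ^ (m + 1)) * ((-1 : ℂ) ^ (m + 1)) = 1 := by
    rw [← mul_pow]; norm_num
  have key2 : toeplitzDet w 0 (m + 2) * toeplitzDet w 0 m
      = toeplitzDet w 0 (m + 1) ^ 2 - toeplitzDet w 1 (m + 1) * toeplitzDet w (-1) (m + 1) := by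
    linear_combination (-1 : ℂ) * key
      - (toeplitzDet w 1 (m + 1) * toeplitzDet w (-1) (m + 1)) * hsq
  have hm1 : m + 1 - 1 = m := rfl
  rw [hm1, show m + 1 + 1 = m + 2 from rfl, key2, sub_div, div_self (pow_ne_zero 2 hI),
    div_mul_div_comm,
    show ((-1 : ℂ) ^ (m + 1) * toeplitzDet w 1 (m + 1))
        * ((-1 : ℂ) ^ (m + 1) * toeplitzDet w (-1) (m + 1))
        = toeplitzDet w 1 (m + 1) * toeplitzDet w (-1) (m + 1) from by
      linear_combination (toeplitzDet w 1 (m + 1) * toeplitzDet w (-1) (m + 1)) * hsq,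
    show toeplitzDet w 0 (m + 1) * toeplitzDet w 0 (m + 1) = toeplitzDet w 0 (m + 1) ^ 2 from
      (sq (toeplitzDet w 0 (m + 1))).symm]
end

section
/- Christoffel–Darboux formula for bi-orthogonal polynomials on the unit circle: for z·ζ̄ ≠ 1 and n ≥ 0, Σ_{j=0}^n φ_j(z) φ̄_j(ζ̄) = (φ*_n(z) φ̄*_n(ζ̄) - z ζ̄ φ_n(z) φ̄_n(ζ̄)) / (1 - z ζ̄), where φ̄*_n(ζ̄) = ζ̄^n φ_n(1/ζ̄). -/
open Polynomial

lemma my_reflect_reflect {R : Type*} [Semiring R] (N : ℕ) (p : R[X]) :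
    (p.reflect N).reflect N = p := by
  ext i
  simp [Polynomial.coeff_reflect, Polynomial.revAt_invol]

lemma my_reflect_X_mul {R : Type*} [Semiring R] {n : ℕ} {p : R[X]} (hp : p.natDegree ≤ n) :
    (X * p).reflect (n + 1) = p.reflect n := by
  have h := Polynomial.reflect_mul (X : R[X]) p (F := 1) (G := n)
    Polynomial.natDegree_X_le hp
  rw [add_comm 1 n] at h
  rw [h, Polynomial.reflect_one_X, one_mul]

lemma my_reflect_succ_reflect {R : Type*} [Semiring R] {n : ℕ} {p : R[X]}
    (hp : p.natDegree ≤ n) :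
    (p.reflect n).reflect (n + 1) = X * p := by
  rw [← my_reflect_X_mul hp, my_reflect_reflect]

/-- Christoffel–Darboux formula for bi-orthogonal polynomials on the unit circle:
`∑_{j=0}^n φ_j(z) φ̄_j(w) = (φ*_n(z) φ̄*_n(w) - z w φ_n(z) φ̄_n(w))/(1 - z w)` for `z w ≠ 1`,
where `φ*_n(z) = z^n φ̄_n(1/z) = (φb n).reverse` and `φ̄*_n(w) = w^n φ_n(1/w) = (φ n).reverse`. -/
theorem christoffel_darboux_biorthogonal (φ φb : ℕ → Polynomial ℂ) (κ : ℕ → ℂ)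
    (hκ : ∀ n, κ n ≠ 0)
    (hdeg : ∀ n, (φ n).natDegree = n ∧ (φb n).natDegree = n)
    (hlead : ∀ n, (φ n).leadingCoeff = κ n ∧ (φb n).leadingCoeff = κ n)
    (hrel : ∀ n, (κ (n + 1)) ^ 2 = (κ n) ^ 2 + (φ (n + 1)).coeff 0 * (φb (n + 1)).coeff 0)
    (hrec1 : ∀ n, C (κ n) * φ (n + 1)
        = C (κ (n + 1)) * (X * φ n) + C ((φ (n + 1)).coeff 0) * (φb n).reverse)
    (hrec2 : ∀ n, C (κ n) * (φb (n + 1)).reverse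
        = C (κ (n + 1)) * (φb n).reverse + C ((φb (n + 1)).coeff 0) * (X * φ n))
    (n : ℕ) (z w : ℂ) (hzw : z * w ≠ 1) :
    ∑ j ∈ Finset.range (n + 1), (φ j).eval z * (φb j).eval w
      = (((φb n).reverse.eval z) * ((φ n).reverse.eval w)
          - z * w * (φ n).eval z * (φb n).eval w) / (1 - z * w) := by
  have hzw' : 1 - z * w ≠ 0 := by
    intro h
    apply hzw
    linear_combination -h
  -- dual recurrences obtained by reflecting the given ones
  have hrec1' : ∀ m, C (κ m) * (φ (m + 1)).reverse
      = C (κ (m + 1)) * (φ m).reverse + C ((φ (m + 1)).coeff 0) * (X * φb m) := by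
    intro m
    have h := congrArg (fun p => Polynomial.reflect (m + 1) p) (hrec1 m)
    simp only [Polynomial.reflect_add, Polynomial.reflect_C_mul] at h
    rw [my_reflect_X_mul (le_of_eq (hdeg m).1),
        show (φb m).reverse = (φb m).reflect m by
          rw [Polynomial.reverse, (hdeg m).2],
        my_reflect_succ_reflect (le_of_eq (hdeg m).2)] at h
    rw [Polynomial.reverse, (hdeg (m + 1)).1]
    rw [Polynomial.reverse, (hdeg m).1]
    exact h
  have hrec2' : ∀ m, C (κ m) * φb (m + 1)
      = C (κ (m + 1)) * (X * φb m) + C ((φb (m + 1)).coeff 0) * (φ m).reverse := by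
    intro m
    have h := congrArg (fun p => Polynomial.reflect (m + 1) p) (hrec2 m)
    simp only [Polynomial.reflect_add, Polynomial.reflect_C_mul] at h
    rw [show (φb (m + 1)).reverse = (φb (m + 1)).reflect (m + 1) by
          rw [Polynomial.reverse, (hdeg (m + 1)).2],
        my_reflect_reflect,
        show (φb m).reverse = (φb m).reflect m by
          rw [Polynomial.reverse, (hdeg m).2],
        my_reflect_succ_reflect (le_of_eq (hdeg m).2),
        my_reflect_X_mul (le_of_eq (hdeg m).1)] at h
    rw [Polynomial.reverse, (hdeg m).1]
    exact h
  induction n with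
  | zero =>
    have h1 : φ 0 = C (κ 0) := by
      have := Polynomial.eq_C_of_natDegree_eq_zero (hdeg 0).1
      rw [this]
      congr 1
      have := (hlead 0).1
      rwa [Polynomial.eq_C_of_natDegree_eq_zero (hdeg 0).1, Polynomial.leadingCoeff_C] at this
    have h2 : φb 0 = C (κ 0) := by
      have := Polynomial.eq_C_of_natDegree_eq_zero (hdeg 0).2
      rw [this]
      congr 1
      have := (hlead 0).2
      rwa [Polynomial.eq_C_of_natDegree_eq_zero (hdeg 0).2, Polynomial.leadingCoeff_C] at this
    rw [Finset.sum_range_one, h1, h2]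
    simp only [Polynomial.reverse_C, Polynomial.eval_C]
    field_simp
  | succ m ih =>
    rw [Finset.sum_range_succ, ih]
    have e1 := congrArg (Polynomial.eval z) (hrec2 m)
    have e2 := congrArg (Polynomial.eval w) (hrec1' m)
    have e3 := congrArg (Polynomial.eval z) (hrec1 m)
    have e4 := congrArg (Polynomial.eval w) (hrec2' m)
    simp only [Polynomial.eval_add, Polynomial.eval_mul, Polynomial.eval_C,
      Polynomial.eval_X] at e1 e2 e3 e4
    rw [div_add' _ _ _ hzw', div_eq_div_iff hzw' hzw']
    have key : ((φb (m + 1)).reverse.eval z) * ((φ (m + 1)).reverse.eval w)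
        - z * w * (φ (m + 1)).eval z * (φb (m + 1)).eval w
        = ((φb m).reverse.eval z) * ((φ m).reverse.eval w)
          - z * w * (φ m).eval z * (φb m).eval w
          + (φ (m + 1)).eval z * (φb (m + 1)).eval w * (1 - z * w) := by
      apply mul_left_cancel₀ (pow_ne_zero 2 (hκ m))
      linear_combination (κ m * (φ (m + 1)).reverse.eval w) * e1
        + (κ (m + 1) * (φb m).reverse.eval z
            + (φb (m + 1)).coeff 0 * z * (φ m).eval z) * e2
        - (κ m * (φb (m + 1)).eval w) * e3
        - (κ (m + 1) * z * (φ m).eval z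
            + (φ (m + 1)).coeff 0 * (φb m).reverse.eval z) * e4
        + ((φb m).reverse.eval z * (φ m).reverse.eval w
            - z * w * (φ m).eval z * (φb m).eval w) * hrel m
    rw [key]
end

section
/- Casoratian identity: if (φ_n, φ*_n) and (ε_n, -ε*_n) are two solution pairs of the coupled recurrences κ_n u_{n+1} = κ_{n+1} z u_n + φ_{n+1}(0) v_n, κ_n v_{n+1} = κ_{n+1} v_n + φ̄_{n+1}(0) z u_n (with signs of φ_{n+1}(0), φ̄_{n+1}(0) reversed for (ε_n, ε*_n)), and the identity φ_n(z) ε*_n(z) + ε_n(z) φ*_n(z) = 2 z^n holds at n = 0, then φ_n(z) ε*_n(z) + ε_n(z) φ*_n(z) = 2 z^n for all n ≥ 0. -/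
/-- Casoratian identity: if `(φ_n, φ*_n)` satisfies the coupled recurrences and
`(ε_n, ε*_n)` satisfies the same recurrences with the signs of `φ_{n+1}(0)` and
`φ̄_{n+1}(0)` reversed, with `κ_{n+1}² = κ_n² + φ_{n+1}(0) φ̄_{n+1}(0)`, and the identity
`φ_0 ε*_0 + ε_0 φ*_0 = 2 z⁰` holds, then `φ_n ε*_n + ε_n φ*_n = 2 z^n` for all `n`. -/
theorem casoratian_identity (z : ℂ) (κ a b φ φs ε εs : ℕ → ℂ)
    (hκ : ∀ n, κ n ≠ 0)
    (hrel : ∀ n, (κ (n + 1)) ^ 2 = (κ n) ^ 2 + a (n + 1) * b (n + 1))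
    (hφ : ∀ n, κ n * φ (n + 1) = κ (n + 1) * z * φ n + a (n + 1) * φs n)
    (hφs : ∀ n, κ n * φs (n + 1) = κ (n + 1) * φs n + b (n + 1) * z * φ n)
    (hε : ∀ n, κ n * ε (n + 1) = κ (n + 1) * z * ε n - a (n + 1) * εs n)
    (hεs : ∀ n, κ n * εs (n + 1) = κ (n + 1) * εs n - b (n + 1) * z * ε n)
    (hbase : φ 0 * εs 0 + ε 0 * φs 0 = 2 * z ^ (0 : ℕ)) :
    ∀ n : ℕ, φ n * εs n + ε n * φs n = 2 * z ^ n := by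
  intro n
  induction n with
  | zero => exact hbase
  | succ n ih =>
    have hk2 : (κ n) ^ 2 ≠ 0 := pow_ne_zero 2 (hκ n)
    have key : (κ n) ^ 2 * (φ (n + 1) * εs (n + 1) + ε (n + 1) * φs (n + 1)) =
        (κ n) ^ 2 * (2 * z ^ (n + 1)) := by
      linear_combination (κ n * εs (n + 1)) * hφ n +
        (κ (n + 1) * z * φ n + a (n + 1) * φs n) * hεs n +
        (κ n * φs (n + 1)) * hε n +
        (κ (n + 1) * z * ε n - a (n + 1) * εs n) * hφs n -
        (z * (φ n * εs n + ε n * φs n)) * hrel n + (2 * z * (φ n * εs n + ε n * φs n)) * hrel n +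
        ((κ n) ^ 2 * z) * ih
    exact mul_left_cancel₀ hk2 key
end

section
/- For k > 1 and t = k^{-2}, the Fourier coefficients F_n = ∫_𝕋 (dz/2πiz) z^n S(z) of the scattering function S(z) = f₋(z)/f₊(z) = (1 - k^{-1}z^{-1})^{-1/2}(1 - k^{-1}z)^{-1/2} are given by F_n = [Γ(|n|+1/2)/(√π · |n|!)] · k^{-|n|} · ₂F₁(1/2, |n|+1/2; |n|+1; k^{-2}) for all n ∈ ℤ. -/
open Real intervalIntegral

open Finset Polynomial Complex

noncomputable def myc (m : ℕ) : ℝ := (ascPochhammer ℝ m).eval (2⁻¹ : ℝ) / m.factorial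

lemma myc_zero : myc 0 = 1 := by simp [myc]

lemma myc_succ (m : ℕ) : myc (m+1) = myc m * ((m + 2⁻¹) / (m+1)) := by
  rw [myc, myc, ascPochhammer_succ_eval, Nat.factorial_succ]
  have h1 : ((m+1).factorial : ℝ) ≠ 0 := by positivity
  field_simp
  push_cast
  ring

lemma myc_pos (m : ℕ) : 0 < myc m := by
  induction m with
  | zero => simp [myc_zero]
  | succ m ih => rw [myc_succ]; positivity

lemma myc_le_one (m : ℕ) : myc m ≤ 1 := by
  induction m with
  | zero => simp [myc_zero]
  | succ m ih =>
    rw [myc_succ]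
    have h : ((m : ℝ) + 2⁻¹) / (m+1) ≤ 1 := by
      rw [div_le_one (by positivity)]; norm_num
    calc myc m * ((m + 2⁻¹)/(m+1)) ≤ 1 * 1 :=
          mul_le_mul ih h (by positivity) one_pos.le
      _ = 1 := one_mul 1

lemma desc_smeval_neg_half (i : ℕ) :
    (descPochhammer ℤ i).smeval (-(2⁻¹:ℝ)) = (-1)^i * ((ascPochhammer ℝ i).eval (2⁻¹:ℝ)) := by
  induction i with
  | zero => simp
  | succ i ih =>
    rw [descPochhammer_succ_right, Polynomial.smeval_mul, ih, ascPochhammer_succ_eval,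
      Polynomial.smeval_sub, Polynomial.smeval_X, Polynomial.smeval_natCast]
    push_cast
    ring

lemma desc_smeval_neg_one (i : ℕ) :
    (descPochhammer ℤ i).smeval (-1:ℝ) = (-1)^i * i.factorial := by
  induction i with
  | zero => simp
  | succ i ih =>
    rw [descPochhammer_succ_right, Polynomial.smeval_mul, ih,
      Polynomial.smeval_sub, Polynomial.smeval_X, Polynomial.smeval_natCast, Nat.factorial_succ]
    push_cast
    ring

lemma myc_conv (m : ℕ) : ∑ ij ∈ antidiagonal m, myc ij.1 * myc ij.2 = 1 := by
  have H := Ring.descPochhammer_smeval_add (R := ℝ) (r := -(2⁻¹:ℝ)) (s := -(2⁻¹:ℝ)) m (Commute.all _ _)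
  have hsum : (-(2⁻¹:ℝ)) + (-(2⁻¹:ℝ)) = -1 := by norm_num
  rw [hsum, desc_smeval_neg_one] at H
  have key : ∀ ij ∈ antidiagonal m, (Nat.choose m ij.1 : ℝ) *
      ((descPochhammer ℤ ij.1).smeval (-(2⁻¹:ℝ)) * (descPochhammer ℤ ij.2).smeval (-(2⁻¹:ℝ)))
      = (-1)^m * m.factorial * (myc ij.1 * myc ij.2) := by
    intro ij hij
    have hij' : ij.1 + ij.2 = m := by simpa using Finset.HasAntidiagonal.mem_antidiagonal.mp hij
    rw [desc_smeval_neg_half, desc_smeval_neg_half]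
    have h1 : (ij.1.factorial : ℝ) ≠ 0 := by positivity
    have h2 : (ij.2.factorial : ℝ) ≠ 0 := by positivity
    have hch : (Nat.choose m ij.1 : ℝ) * ij.1.factorial * ij.2.factorial = m.factorial := by
      have := Nat.choose_mul_factorial_mul_factorial (n := m) (k := ij.1)
        (by omega : ij.1 ≤ m)
      have h2' : m - ij.1 = ij.2 := by omega
      rw [h2'] at this
      exact_mod_cast congrArg (Nat.cast : ℕ → ℝ) this
    rw [myc, myc]
    have : ((-1:ℝ))^ij.1 * ((-1:ℝ))^ij.2 = (-1)^m := by
      rw [← pow_add, hij']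
    field_simp
    rw [← this, ← hch]
    ring
  rw [Finset.sum_congr rfl key, ← Finset.mul_sum] at H
  have hm : ((-1:ℝ))^m * m.factorial ≠ 0 := by
    have : (m.factorial : ℝ) ≠ 0 := by positivity
    simp [this]
  field_simp at H
  exact H.symm

lemma summable_norm_cx {x : ℂ} (hx : ‖x‖ < 1) :
    Summable (fun m : ℕ => ‖(myc m : ℂ) * x^m‖) := by
  apply Summable.of_nonneg_of_le (fun m => norm_nonneg _) (fun m => ?_)
    (summable_geometric_of_lt_one (norm_nonneg x) hx)
  rw [norm_mul, norm_pow]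
  calc ‖(myc m : ℂ)‖ * ‖x‖^m ≤ 1 * ‖x‖^m := by
        apply mul_le_mul_of_nonneg_right _ (by positivity)
        rw [Complex.norm_real, Real.norm_eq_abs, abs_of_pos (myc_pos m)]
        exact myc_le_one m
    _ = ‖x‖^m := one_mul _

lemma summable_cx {x : ℂ} (hx : ‖x‖ < 1) : Summable (fun m : ℕ => (myc m : ℂ) * x^m) :=
  (summable_norm_cx hx).of_norm

noncomputable def gg (x : ℂ) : ℂ := ∑' m : ℕ, (myc m : ℂ) * x^m

lemma gg_zero : gg 0 = 1 := by
  rw [gg, tsum_eq_single 0 (fun m hm => by simp [zero_pow hm])]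
  simp [myc_zero]

lemma gg_sq {x : ℂ} (hx : ‖x‖ < 1) : gg x * gg x = (1 - x)⁻¹ := by
  rw [gg, tsum_mul_tsum_eq_tsum_sum_antidiagonal_of_summable_norm
    (summable_norm_cx hx) (summable_norm_cx hx)]
  have : ∀ n : ℕ, ∑ ij ∈ antidiagonal n, (myc ij.1 : ℂ) * x^ij.1 * ((myc ij.2 : ℂ) * x^ij.2)
      = x^n := by
    intro n
    have : ∀ ij ∈ antidiagonal n, (myc ij.1 : ℂ) * x^ij.1 * ((myc ij.2 : ℂ) * x^ij.2)
        = ((myc ij.1 * myc ij.2 : ℝ) : ℂ) * x^n := by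
      intro ij hij
      have h : ij.1 + ij.2 = n := Finset.HasAntidiagonal.mem_antidiagonal.mp hij
      push_cast
      rw [← h, pow_add]
      ring
    rw [Finset.sum_congr rfl this, ← Finset.sum_mul, ← Complex.ofReal_sum, myc_conv]
    simp
  simp_rw [this]
  exact tsum_geometric_of_norm_lt_one hx
lemma gg_continuousOn {r : ℝ} (hr : r < 1) :
    ContinuousOn gg (Metric.closedBall (0:ℂ) r) := by
  rcases le_or_gt r 0 with h | h
  · rcases lt_or_eq_of_le h with h' | h'
    · simp [Metric.closedBall_eq_empty.mpr h']
    · rw [h', Metric.closedBall_zero]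
      exact continuousOn_singleton _ _
  apply TendstoUniformlyOn.continuousOn
    (tendstoUniformlyOn_tsum (f := fun (m:ℕ) (x:ℂ) => (myc m : ℂ) * x^m) (u := fun m => r^m)
      (summable_geometric_of_lt_one h.le hr) ?_)
  · refine Filter.Frequently.of_forall fun t => ?_
    exact continuousOn_finset_sum t fun m _ => (Continuous.continuousOn (by continuity))
  · intro m x hx
    rw [norm_mul, norm_pow]
    simp only [Metric.mem_closedBall, dist_zero_right] at hx
    calc ‖(myc m : ℂ)‖ * ‖x‖^m ≤ 1 * r^m := by
          apply mul_le_mul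
          · rw [Complex.norm_real, Real.norm_eq_abs, abs_of_pos (myc_pos m)]
            exact myc_le_one m
          · exact pow_le_pow_left₀ (norm_nonneg x) hx m
          · positivity
          · norm_num
      _ = r^m := one_mul _

lemma hasSum_binom {x : ℂ} (hx : ‖x‖ < 1) :
    HasSum (fun m : ℕ => (myc m : ℂ) * x^m) ((1 - x) ^ (-(1/2) : ℂ)) := by
  set r := ‖x‖ with hr
  set S := Metric.closedBall (0:ℂ) r with hS
  have hSx : x ∈ S := by simp [hS, hr]
  have hS0 : (0:ℂ) ∈ S := by
    simp only [hS, Metric.mem_closedBall, dist_self]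
    rw [hr]; positivity
  have hSconn : IsPreconnected S := (convex_closedBall _ _).isPreconnected
  have hne : ∀ y ∈ S, (1 - y) ∈ Complex.slitPlane := by
    intro y hy
    rw [Complex.mem_slitPlane_iff]
    left
    simp only [Complex.sub_re, Complex.one_re]
    have : y.re ≤ ‖y‖ := Complex.re_le_norm y
    have hy' : ‖y‖ ≤ r := by simpa [hS, dist_zero_right] using hy
    linarith
  have hne0 : ∀ y ∈ S, (1 - y) ≠ 0 := fun y hy => Complex.slitPlane_ne_zero (hne y hy)
  set q : ℂ → ℂ := fun y => gg y * (1 - y) ^ ((1/2 : ℂ)) with hq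
  have hqcont : ContinuousOn q S := by
    apply ContinuousOn.mul (gg_continuousOn hx)
    intro y hy
    exact ((continuousAt_cpow_const (hne y hy)).comp
      ((continuous_const.sub continuous_id).continuousAt)).continuousWithinAt
  have hqsq : ∀ y ∈ S, q y * q y = 1 := by
    intro y hy
    have hylt : ‖y‖ < 1 := by
      have : ‖y‖ ≤ r := by simpa [hS, dist_zero_right] using hy
      linarith
    have : (1 - y) ^ ((1/2:ℂ)) * (1 - y) ^ ((1/2:ℂ)) = (1 - y) := by
      rw [← Complex.cpow_add _ _ (hne0 y hy)]
      norm_num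
    calc q y * q y = (gg y * gg y) * ((1-y)^((1/2:ℂ)) * (1-y)^((1/2:ℂ))) := by rw [hq]; ring
      _ = (1 - y)⁻¹ * (1 - y) := by rw [gg_sq hylt, this]
      _ = 1 := inv_mul_cancel₀ (hne0 y hy)
  have hq0 : q 0 = 1 := by simp [hq, gg_zero]
  have hqmem : ∀ y ∈ S, q y = 1 ∨ q y = -1 := fun y hy => mul_self_eq_one_iff.mp (hqsq y hy)
  have hqx : q x = 1 := by
    by_contra hcon
    have hqxneg : q x = -1 := (hqmem x hSx).resolve_left hcon
    have hrecont : ContinuousOn (fun y => (q y).re) S :=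
      Complex.continuous_re.comp_continuousOn hqcont
    have := hSconn.intermediate_value hSx hS0 hrecont
    have h0mem : (0:ℝ) ∈ (fun y => (q y).re) '' S := by
      apply this
      rw [hqxneg, hq0]
      norm_num
    obtain ⟨y, hy, hy0⟩ := h0mem
    have hy0' : (q y).re = 0 := hy0
    rcases hqmem y hy with h | h <;> rw [h] at hy0' <;> norm_num at hy0'
  have hgx : gg x = (1 - x) ^ (-(1/2):ℂ) := by
    have h1 : gg x * (1 - x)^((1/2:ℂ)) = 1 := hqx
    have hAA : (1-x)^((1/2:ℂ)) * (1-x)^((1/2:ℂ)) = 1 - x := by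
      rw [← Complex.cpow_add _ _ (hne0 x hSx)]; norm_num
    have hAne : (1-x)^((1/2:ℂ)) ≠ 0 := fun h => (hne0 x hSx) (by rw [← hAA, h, mul_zero])
    rw [Complex.cpow_neg]
    field_simp
    exact h1
  rw [← hgx]
  exact (summable_cx hx).hasSum

lemma orth (j : ℤ) : (∫ θ in (-π)..π, Complex.exp (Complex.I * j * θ))
    = if j = 0 then (2*π:ℝ) else 0 := by
  rcases eq_or_ne j 0 with h | h
  · simp only [h, Int.cast_zero, mul_zero, zero_mul, Complex.exp_zero]
    rw [intervalIntegral.integral_const, if_true]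
    push_cast
    rw [sub_neg_eq_add, Complex.real_smul, mul_one]
    push_cast
    ring
  · rw [if_neg h]
    have hc : (Complex.I * j) ≠ 0 := by
      simp [Complex.I_ne_zero, Complex.ext_iff]
      exact_mod_cast h
    rw [show (fun θ:ℝ => Complex.exp (Complex.I * j * θ)) = fun θ:ℝ => Complex.exp ((Complex.I * j) * θ) from funext fun θ => by rw [mul_assoc]]
    rw [integral_exp_mul_complex hc]
    have e1 : Complex.I * j * π = j * (π * Complex.I) := by ring
    have e2 : Complex.I * j * (-π : ℝ) = ((-j : ℤ) : ℂ) * (π * Complex.I) := by push_cast; ring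
    rw [e1, e2, Complex.exp_int_mul, Complex.exp_int_mul, Complex.exp_pi_mul_I]
    have h2 : ((-1:ℂ))^j * ((-1:ℂ))^j = 1 := by rw [← mul_zpow]; norm_num
    rw [zpow_neg, ← eq_inv_of_mul_eq_one_left h2, sub_self, zero_div]
    norm_num

lemma norm_exp_I_int_mul (c : ℝ) : ‖Complex.exp (Complex.I * c)‖ = 1 := by
  rw [show Complex.I * c = (c:ℂ) * Complex.I by ring]
  exact Complex.norm_exp_ofReal_mul_I c

lemma summable_mycr {r : ℝ} (hr0 : 0 ≤ r) (hr1 : r < 1) :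
    Summable (fun m : ℕ => myc m * r^m) := by
  apply Summable.of_nonneg_of_le
    (fun m => mul_nonneg (myc_pos m).le (pow_nonneg hr0 m)) (fun m => ?_)
    (summable_geometric_of_lt_one hr0 hr1)
  calc myc m * r^m ≤ 1 * r^m :=
        mul_le_mul_of_nonneg_right (myc_le_one m) (by positivity)
    _ = r^m := one_mul _

lemma summable_pair {r : ℝ} (hr0 : 0 ≤ r) (hr1 : r < 1) :
    Summable (fun p : ℕ × ℕ => myc p.1 * myc p.2 * r^(p.1+p.2)) := by
  have := Summable.mul_of_nonneg (summable_mycr hr0 hr1) (summable_mycr hr0 hr1)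
    (fun m => mul_nonneg (myc_pos m).le (pow_nonneg hr0 m))
    (fun m => mul_nonneg (myc_pos m).le (pow_nonneg hr0 m))
  apply this.congr
  intro p
  rw [pow_add]
  ring

lemma key_integral {r : ℝ} (hr0 : 0 < r) (hr1 : r < 1) (N : ℕ) :
    (∫ θ in (-π)..π, Complex.exp (Complex.I * N * θ) *
        (1 - (r:ℂ) * Complex.exp (-(Complex.I * θ))) ^ (-((1:ℂ) / 2)) *
        (1 - (r:ℂ) * Complex.exp (Complex.I * θ)) ^ (-((1:ℂ) / 2)))
      = ((2*π : ℝ):ℂ) * ((∑' m:ℕ, myc (m+N) * myc m * r^(2*m+N) : ℝ) : ℂ) := by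
  -- the continuous family
  set j : ℕ × ℕ → ℤ := fun p => (N:ℤ) + p.2 - p.1 with hj
  set b : ℕ × ℕ → ℝ := fun p => myc p.1 * myc p.2 * r^(p.1+p.2) with hb
  have hbpos : ∀ p, 0 < b p := fun p => by
    simp only [hb]
    exact mul_pos (mul_pos (myc_pos _) (myc_pos _)) (pow_pos hr0 _)
  set F : ℕ × ℕ → C(ℝ, ℂ) := fun p =>
    ⟨fun θ => ((b p : ℝ):ℂ) * Complex.exp (Complex.I * (j p : ℂ) * θ),
      by
        apply Continuous.mul continuous_const
        exact Complex.continuous_exp.comp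
          ((continuous_const.mul (Complex.continuous_ofReal)))⟩ with hF
  have hFnorm : ∀ p (θ : ℝ), ‖F p θ‖ = b p := by
    intro p θ
    rw [hF]
    simp only [ContinuousMap.coe_mk, norm_mul]
    rw [show Complex.I * (j p : ℂ) * θ = Complex.I * ((j p * θ : ℝ):ℂ) by push_cast; ring,
      norm_exp_I_int_mul, mul_one, Complex.norm_real, Real.norm_eq_abs,
      abs_of_pos (hbpos p)]
  have hsumb : Summable b := summable_pair hr0.le hr1
  have hf_sum : Summable (fun p : ℕ × ℕ =>
      ‖(F p).restrict (⟨Set.uIcc (-π) π, isCompact_uIcc⟩ : TopologicalSpace.Compacts ℝ)‖) := by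
    apply Summable.of_nonneg_of_le (fun p => norm_nonneg _) (fun p => ?_) hsumb
    apply ContinuousMap.norm_le _ (hbpos p).le |>.mpr
    intro θ
    rw [ContinuousMap.restrict_apply]
    exact (hFnorm p θ).le
  have hstep1 := hasSum_intervalIntegral_of_summable_norm (a := -π) (b := π) hf_sum
  have hnormx : ∀ z : ℂ, ‖z‖ = 1 → ‖(r:ℂ) * z‖ = r := by
    intro z hz
    rw [norm_mul, hz, mul_one, Complex.norm_real, Real.norm_eq_abs, abs_of_pos hr0]
  have hnorm1 : ∀ θ : ℝ, ‖(r:ℂ) * Complex.exp (-(Complex.I * θ))‖ = r := fun θ =>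
    hnormx _ (by
      rw [show -(Complex.I * (θ:ℂ)) = Complex.I * ((-θ : ℝ):ℂ) by push_cast; ring]
      exact norm_exp_I_int_mul (-θ))
  have hnorm2 : ∀ θ : ℝ, ‖(r:ℂ) * Complex.exp (Complex.I * θ)‖ = r := fun θ =>
    hnormx _ (norm_exp_I_int_mul θ)
  have hpt : ∀ θ : ℝ, HasSum (fun p : ℕ × ℕ => F p θ)
      (Complex.exp (Complex.I * N * θ) *
        (1 - (r:ℂ) * Complex.exp (-(Complex.I * θ))) ^ (-((1:ℂ) / 2)) *
        (1 - (r:ℂ) * Complex.exp (Complex.I * θ)) ^ (-((1:ℂ) / 2))) := by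
    intro θ
    set x₁ : ℂ := (r:ℂ) * Complex.exp (-(Complex.I * θ)) with hx₁
    set x₂ : ℂ := (r:ℂ) * Complex.exp (Complex.I * θ) with hx₂
    have hn1 : ‖x₁‖ = r := by rw [hx₁]; exact hnorm1 θ
    have hn2 : ‖x₂‖ = r := by rw [hx₂]; exact hnorm2 θ
    have h₁ := hasSum_binom (x := x₁) (by rw [hn1]; exact hr1)
    have h₂ := hasSum_binom (x := x₂) (by rw [hn2]; exact hr1)
    have hsummul : Summable (fun p : ℕ × ℕ =>
        ((myc p.1 : ℂ) * x₁^p.1) * ((myc p.2 : ℂ) * x₂^p.2)) := by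
      apply Summable.of_norm
      apply Summable.of_nonneg_of_le (fun p => norm_nonneg _) (fun p => ?_) hsumb
      have hbp : b p = (myc p.1 * r^p.1) * (myc p.2 * r^p.2) := by
        simp only [hb]; rw [pow_add]; ring
      rw [norm_mul, norm_mul, norm_mul, norm_pow, norm_pow, hnorm1 θ, hnorm2 θ,
        Complex.norm_real, Complex.norm_real, Real.norm_eq_abs, Real.norm_eq_abs,
        abs_of_pos (myc_pos p.1), abs_of_pos (myc_pos p.2), hbp]
    have hmul := (h₁.mul h₂ hsummul).mul_left (Complex.exp (Complex.I * N * θ))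
    rw [mul_assoc]
    have hfun : ∀ p : ℕ × ℕ, Complex.exp (Complex.I * N * θ) *
        (((myc p.1 : ℂ) * x₁^p.1) * ((myc p.2 : ℂ) * x₂^p.2)) = F p θ := by
      intro p
      have hexp : Complex.exp (Complex.I * ((j p : ℤ) : ℂ) * θ) =
          Complex.exp (Complex.I * N * θ) * Complex.exp ((p.1:ℂ) * -(Complex.I*θ)) *
            Complex.exp ((p.2:ℂ) * (Complex.I*θ)) := by
        rw [← Complex.exp_add, ← Complex.exp_add]
        congr 1
        simp only [hj]
        push_cast
        ring
      simp only [hF, ContinuousMap.coe_mk, hx₁, hx₂]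
      rw [hexp]
      have e1 : ((r:ℂ) * Complex.exp (-(Complex.I * θ)))^p.1
          = (r:ℂ)^p.1 * Complex.exp ((p.1:ℂ) * -(Complex.I*θ)) := by
        rw [mul_pow, Complex.exp_nat_mul]
      have e2 : ((r:ℂ) * Complex.exp (Complex.I * θ))^p.2
          = (r:ℂ)^p.2 * Complex.exp ((p.2:ℂ) * (Complex.I*θ)) := by
        rw [mul_pow, Complex.exp_nat_mul]
      rw [e1, e2]
      simp only [hb]
      push_cast
      rw [pow_add]
      ring
    exact (funext hfun : _) ▸ hmul
  have hFint : ∀ p : ℕ × ℕ, (∫ θ in (-π)..π, F p θ)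
      = ((b p : ℝ):ℂ) * (if j p = 0 then ((2*π:ℝ):ℂ) else 0) := by
    intro p
    simp only [hF, ContinuousMap.coe_mk]
    rw [intervalIntegral.integral_const_mul]
    congr 1
    rw [orth (j p)]
    split <;> simp
  -- identify the integral of the tsum
  rw [show (∫ θ in (-π)..π, ∑' p : ℕ × ℕ, F p θ) = ∫ θ in (-π)..π,
      Complex.exp (Complex.I * N * θ) *
        (1 - (r:ℂ) * Complex.exp (-(Complex.I * θ))) ^ (-((1:ℂ) / 2)) *
        (1 - (r:ℂ) * Complex.exp (Complex.I * θ)) ^ (-((1:ℂ) / 2)) from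
    intervalIntegral.integral_congr (fun θ _ => (hpt θ).tsum_eq)] at hstep1
  -- the collapsed sum
  have hsum2 : Summable (fun m : ℕ => myc (m+N) * myc m * r^(2*m+N)) := by
    apply Summable.of_nonneg_of_le
      (fun m => mul_nonneg (mul_nonneg (myc_pos _).le (myc_pos _).le) (pow_nonneg hr0.le _))
      (fun m => ?_) (summable_geometric_of_lt_one hr0.le hr1)
    calc myc (m+N) * myc m * r^(2*m+N) ≤ 1 * 1 * r^m := by
          apply mul_le_mul
          · exact mul_le_mul (myc_le_one _) (myc_le_one _) (myc_pos _).le zero_le_one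
          · exact pow_le_pow_of_le_one hr0.le hr1.le (by omega)
          · positivity
          · norm_num
      _ = r^m := by ring
  have hreal := hsum2.hasSum
  have hC : HasSum (fun m : ℕ => ((myc (m+N) * myc m * r^(2*m+N) : ℝ):ℂ))
      (((∑' m:ℕ, myc (m+N) * myc m * r^(2*m+N) : ℝ)):ℂ) := Complex.hasSum_ofReal.mpr hreal
  have hC2 := hC.mul_left ((2*π:ℝ):ℂ)
  set f : ℕ × ℕ → ℂ := fun p => ((b p : ℝ):ℂ) * (if j p = 0 then ((2*π:ℝ):ℂ) else 0) with hf
  have hG : Function.Injective (fun m : ℕ => ((m+N, m) : ℕ × ℕ)) := by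
    intro a b h
    simpa using congrArg Prod.snd h
  have hzero : ∀ p : ℕ × ℕ, p ∉ Set.range (fun m : ℕ => ((m+N, m) : ℕ × ℕ)) → f p = 0 := by
    intro p hp
    have : p.1 ≠ p.2 + N := by
      intro hcon
      exact hp ⟨p.2, by ext <;> simp [hcon]⟩
    have hjne : j p ≠ 0 := by
      simp only [hj]
      omega
    simp [hf, hjne]
  have hcomp : ∀ m : ℕ, f ((m+N, m)) = ((2*π:ℝ):ℂ) * ((myc (m+N) * myc m * r^(2*m+N) : ℝ):ℂ) := by
    intro m
    have hjz : j ((m+N, m)) = 0 := by simp only [hj]; omega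
    have hbz : b ((m+N, m)) = myc (m+N) * myc m * r^(2*m+N) := by
      simp only [hb]
      congr 2
      omega
    simp only [hf, hjz, if_pos rfl, hbz]
    push_cast
    ring
  have hBig : HasSum f (((2*π:ℝ):ℂ) * ((∑' m:ℕ, myc (m+N) * myc m * r^(2*m+N) : ℝ):ℂ)) := by
    rw [← Function.Injective.hasSum_iff hG hzero]
    exact HasSum.congr_fun hC2 (fun m => hcomp m)
  have hLHS : HasSum f (∫ θ in (-π)..π,
      Complex.exp (Complex.I * N * θ) *
        (1 - (r:ℂ) * Complex.exp (-(Complex.I * θ))) ^ (-((1:ℂ) / 2)) *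
        (1 - (r:ℂ) * Complex.exp (Complex.I * θ)) ^ (-((1:ℂ) / 2))) := by
    refine HasSum.congr_fun hstep1 (fun p => ?_)
    rw [hf, hFint p]
  exact hLHS.unique hBig

lemma gamma_poch (N : ℕ) :
    Real.Gamma ((N:ℝ) + 1/2) = (ascPochhammer ℝ N).eval (2⁻¹:ℝ) * Real.sqrt π := by
  induction N with
  | zero => simpa using Real.Gamma_one_half_eq
  | succ N ih =>
    have h : ((N:ℝ) + 1/2) ≠ 0 := by positivity
    have : ((N+1:ℕ):ℝ) + 1/2 = ((N:ℝ) + 1/2) + 1 := by push_cast; ring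
    rw [this, Real.Gamma_add_one h, ih, ascPochhammer_succ_eval]
    ring

lemma poch_split (N m : ℕ) :
    (ascPochhammer ℝ (N+m)).eval (2⁻¹:ℝ)
      = (ascPochhammer ℝ N).eval (2⁻¹:ℝ) * (ascPochhammer ℝ m).eval ((N:ℝ) + 1/2) := by
  have := congrArg (Polynomial.eval (2⁻¹:ℝ)) (ascPochhammer_mul (S := ℝ) N m)
  rw [Polynomial.eval_mul, Polynomial.eval_comp, Polynomial.eval_add, Polynomial.eval_X,
    Polynomial.eval_natCast] at this
  rw [← this]
  norm_num [add_comm]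

lemma poch_fact (N m : ℕ) :
    ((N+m).factorial : ℝ) = (N.factorial : ℝ) * (ascPochhammer ℝ m).eval ((N:ℝ) + 1) := by
  have := factorial_mul_ascPochhammer ℝ N m
  rw [← this]

/-- The Gauss hypergeometric function `₂F₁(a,b;c;t)` as a power series. -/
noncomputable def gaussHyp (a b c t : ℝ) : ℝ :=
  ∑' n : ℕ, ((ascPochhammer ℝ n).eval a * (ascPochhammer ℝ n).eval b /
    (ascPochhammer ℝ n).eval c) * t ^ n / (n.factorial : ℝ)


lemma term_eq {r : ℝ} (hr0 : 0 < r) (N m : ℕ) :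
    myc (m+N) * myc m * r^(2*m+N)
      = (Real.Gamma ((N:ℝ) + 1/2) / (Real.sqrt π * (N.factorial : ℝ)) * r^N) *
        (((ascPochhammer ℝ m).eval (1/2:ℝ) * (ascPochhammer ℝ m).eval ((N:ℝ) + 1/2) /
          (ascPochhammer ℝ m).eval ((N:ℝ) + 1)) * (r^2)^m / (m.factorial : ℝ)) := by
  have hC : 0 < (ascPochhammer ℝ m).eval ((N:ℝ) + 1) := ascPochhammer_pos m _ (by positivity)
  have hs : (0:ℝ) < Real.sqrt π := Real.sqrt_pos.mpr Real.pi_pos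
  have hNf : ((N.factorial : ℝ)) ≠ 0 := by positivity
  have hmf : ((m.factorial : ℝ)) ≠ 0 := by positivity
  have hNm : (((N+m).factorial : ℝ)) ≠ 0 := by positivity
  rw [gamma_poch, myc, myc, show m + N = N + m by ring, poch_split]
  have hpow : r^(2*m+N) = (r^2)^m * r^N := by rw [← pow_mul, ← pow_add]
  rw [hpow, show (1/2 : ℝ) = 2⁻¹ by norm_num]
  rw [poch_fact N m]
  field_simp


/-- The Fourier coefficients of the scattering function
`S(z) = (1-k⁻¹z⁻¹)^{-1/2}(1-k⁻¹z)^{-1/2}`: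
`F_n = [Γ(|n|+1/2)/(√π |n|!)] k^{-|n|} ₂F₁(1/2,|n|+1/2;|n|+1;k^{-2})` for all `n ∈ ℤ`. -/
theorem scattering_fourier_coeff (k : ℝ) (hk : 1 < k) (n : ℤ) :
    (1 / (2 * (π : ℂ))) * ∫ θ in (-π)..π,
        Complex.exp (Complex.I * n * θ) *
          (1 - (k : ℂ)⁻¹ * Complex.exp (-(Complex.I * θ))) ^ (-((1 : ℂ) / 2)) *
          (1 - (k : ℂ)⁻¹ * Complex.exp (Complex.I * θ)) ^ (-((1 : ℂ) / 2))
      = ((Real.Gamma ((n.natAbs : ℝ) + 1/2) / (Real.sqrt π * (n.natAbs.factorial : ℝ)) *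
          k ^ (-|n|) *
          gaussHyp (1/2) ((n.natAbs : ℝ) + 1/2) ((n.natAbs : ℝ) + 1) (k ^ (-2 : ℤ)) : ℝ) : ℂ) := by
  have hk0 : (0:ℝ) < k := lt_trans one_pos hk
  set r : ℝ := k⁻¹ with hrdef
  have hr0 : 0 < r := by positivity
  have hr1 : r < 1 := by
    rw [hrdef]
    exact inv_lt_one_of_one_lt₀ hk
  set N : ℕ := n.natAbs with hN
  have hcast : ((r:ℝ):ℂ) = (k:ℂ)⁻¹ := Complex.ofReal_inv k
  -- reduce to N
  have hred : (∫ θ in (-π)..π, Complex.exp (Complex.I * n * θ) *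
          (1 - (k : ℂ)⁻¹ * Complex.exp (-(Complex.I * θ))) ^ (-((1 : ℂ) / 2)) *
          (1 - (k : ℂ)⁻¹ * Complex.exp (Complex.I * θ)) ^ (-((1 : ℂ) / 2)))
      = (∫ θ in (-π)..π, Complex.exp (Complex.I * N * θ) *
          (1 - (k : ℂ)⁻¹ * Complex.exp (-(Complex.I * θ))) ^ (-((1 : ℂ) / 2)) *
          (1 - (k : ℂ)⁻¹ * Complex.exp (Complex.I * θ)) ^ (-((1 : ℂ) / 2))) := by
    rcases le_or_gt 0 n with hn | hn
    · have : ((n:ℂ)) = (N:ℂ) := by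
        have hInt : (N:ℤ) = n := by rw [hN]; omega
        exact_mod_cast congrArg (Int.cast : ℤ → ℂ) hInt.symm
      rw [this]
    · have hnN : (n : ℂ) = -(N:ℂ) := by
        have : (n:ℤ) = -(N:ℤ) := by rw [hN]; omega
        exact_mod_cast congrArg (fun z : ℤ => (z:ℂ)) this
      have := intervalIntegral.integral_comp_neg (a := -π) (b := π)
        (fun θ : ℝ => Complex.exp (Complex.I * N * θ) *
          (1 - (k : ℂ)⁻¹ * Complex.exp (-(Complex.I * θ))) ^ (-((1 : ℂ) / 2)) *
          (1 - (k : ℂ)⁻¹ * Complex.exp (Complex.I * θ)) ^ (-((1 : ℂ) / 2)))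
      rw [neg_neg] at this
      rw [← this]
      apply intervalIntegral.integral_congr
      intro θ _
      simp only
      have e0 : ((-θ : ℝ) : ℂ) = -(θ:ℂ) := by push_cast; ring
      rw [e0]
      rw [show Complex.I * (N:ℂ) * -(θ:ℂ) = Complex.I * (n:ℂ) * θ by rw [hnN]; ring,
        show -(Complex.I * -(θ:ℂ)) = Complex.I * (θ:ℂ) by ring,
        show Complex.I * -(θ:ℂ) = -(Complex.I * (θ:ℂ)) by ring]
      ring
  rw [hred, ← hcast, key_integral hr0 hr1 N]
  -- now pure algebra
  have hsum : (∑' m:ℕ, myc (m+N) * myc m * r^(2*m+N) : ℝ)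
      = Real.Gamma ((N : ℝ) + 1/2) / (Real.sqrt π * (N.factorial : ℝ)) * r^N *
        gaussHyp (1/2) ((N : ℝ) + 1/2) ((N : ℝ) + 1) (r^2) := by
    rw [gaussHyp, ← tsum_mul_left]
    exact tsum_congr (fun m => term_eq hr0 N m)
  have hzpow : (k : ℝ) ^ (-|n| : ℤ) = r^N := by
    rw [show |n| = (N:ℤ) by rw [hN]; exact Int.abs_eq_natAbs n, zpow_neg, zpow_natCast, hrdef, inv_pow]
  have hzpow2 : (k : ℝ) ^ (-2 : ℤ) = r^2 := by
    have h1 : (k:ℝ)^(-2:ℤ) = (k^2)⁻¹ := by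
      rw [zpow_neg, zpow_two, sq]
    rw [h1, hrdef, inv_pow]
  rw [hsum, hzpow, hzpow2]
  have hpi : ((2:ℂ) * (π:ℂ)) ≠ 0 := by
    simp [Real.pi_ne_zero]
  rw [show ((2*π:ℝ):ℂ) = 2*(π:ℂ) by push_cast; ring]
  rw [← mul_assoc, one_div, inv_mul_cancel₀ hpi, one_mul]
end
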